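/- arXiv:1312.0325 — 2 statements merged into one kernel-verified Lean document; each statement's English description precedes it below -/
import Mathlib

section
/- Let d ≥ 2 and n ≥ d+2 be integers with C(n,d) even. Then there exists a perfect family M of d-element subsets of [n] with |M| = C(n,d)/2. -/
/-- `M` is a family of `d`-element subsets of `[n] = {1,...,n}`. -/
def isFam (n d : ℕ) (M : Finset (Finset ℕ)) : Prop :=
  ∀ a ∈ M, a ⊆ Finset.Icc 1 n ∧ a.card = d

/-- Every `(d+1)`-subset of `[n]` contains a member of `M`. -/
def upperPerfect (n d : ℕ) (M : Finset (Finset ℕ)) : Prop :=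
  ∀ u : Finset ℕ, u ⊆ Finset.Icc 1 n → u.card = d + 1 → ∃ a ∈ M, a ⊆ u

/-- Every `(d-1)`-subset of `[n]` is contained in a member of `M`. -/
def lowerPerfect (n d : ℕ) (M : Finset (Finset ℕ)) : Prop :=
  ∀ u : Finset ℕ, u ⊆ Finset.Icc 1 n → u.card = d - 1 → ∃ a ∈ M, u ⊆ a

/-- `M` is perfect: both upper and lower perfect. -/
def perfectFam (n d : ℕ) (M : Finset (Finset ℕ)) : Prop :=
  upperPerfect n d M ∧ lowerPerfect n d M

open Finset

lemma two_mul_choose_two (n : ℕ) : 2 * n.choose 2 = n * (n - 1) := by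
  induction n with
  | zero => simp
  | succ m ih =>
    rw [Nat.choose_succ_succ]
    cases m with
    | zero => simp
    | succ l =>
      simp only [Nat.succ_sub_one] at *
      rw [Nat.mul_add, ih, Nat.choose_one_right]
      ring

/-- Base case `d = 2`: two cliques. -/
lemma base_two (n : ℕ) (hn : 4 ≤ n) :
    ∃ P : Finset (Finset ℕ), isFam n 2 P ∧ perfectFam n 2 P ∧ 2 * P.card ≤ n.choose 2 := by
  set k := n / 2 with hk
  have hk2 : 2 ≤ k := by omega
  have hnk2 : 2 ≤ n - k := by omega
  refine ⟨((Finset.Icc 1 k).powersetCard 2) ∪ ((Finset.Icc (k+1) n).powersetCard 2), ?_, ⟨?_, ?_⟩, ?_⟩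
  · -- isFam
    intro a ha
    rcases Finset.mem_union.mp ha with h | h <;> rw [Finset.mem_powersetCard] at h
    · exact ⟨h.1.trans (Finset.Icc_subset_Icc le_rfl (by omega)), h.2⟩
    · exact ⟨h.1.trans (Finset.Icc_subset_Icc (by omega) le_rfl), h.2⟩
  · -- upper
    intro u hu hcard
    set u1 := u.filter (· ≤ k) with hu1
    set u2 := u.filter (fun x => ¬ x ≤ k) with hu2
    have hdis : Disjoint u1 u2 := Finset.disjoint_filter_filter_not u u (· ≤ k)
    have hun : u1 ∪ u2 = u := Finset.filter_union_filter_not_eq _ u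
    have hsum : u1.card + u2.card = 3 := by
      rw [← Finset.card_union_of_disjoint hdis, hun, hcard]
    have hsub1 : u1 ⊆ Finset.Icc 1 k := by
      intro x hx
      rw [hu1, Finset.mem_filter] at hx
      have := hu hx.1
      simp only [Finset.mem_Icc] at this ⊢
      exact ⟨this.1, hx.2⟩
    have hsub2 : u2 ⊆ Finset.Icc (k+1) n := by
      intro x hx
      rw [hu2, Finset.mem_filter] at hx
      have := hu hx.1
      simp only [Finset.mem_Icc] at this ⊢
      omega
    rcases (by omega : 2 ≤ u1.card ∨ 2 ≤ u2.card) with h | h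
    · obtain ⟨t, ht, htc⟩ := Finset.exists_subset_card_eq h
      refine ⟨t, Finset.mem_union_left _ ?_, ht.trans ?_⟩
      · exact Finset.mem_powersetCard.mpr ⟨ht.trans hsub1, htc⟩
      · intro x hx; exact (hun ▸ Finset.mem_union_left _ hx)
    · obtain ⟨t, ht, htc⟩ := Finset.exists_subset_card_eq h
      refine ⟨t, Finset.mem_union_right _ ?_, ht.trans ?_⟩
      · exact Finset.mem_powersetCard.mpr ⟨ht.trans hsub2, htc⟩
      · intro x hx; exact (hun ▸ Finset.mem_union_right _ hx)
  · -- lower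
    intro v hv hcard
    obtain ⟨a, rfl⟩ := Finset.card_eq_one.mp hcard
    have ha := hv (Finset.mem_singleton_self a)
    rw [Finset.mem_Icc] at ha
    by_cases hak : a ≤ k
    · have haI : a ∈ Finset.Icc 1 k := Finset.mem_Icc.mpr ⟨ha.1, hak⟩
      have hcardI : 1 < (Finset.Icc 1 k).card := by rw [Nat.card_Icc]; omega
      obtain ⟨b, hbI, hba⟩ := Finset.exists_mem_ne hcardI a
      refine ⟨{a, b}, Finset.mem_union_left _ (Finset.mem_powersetCard.mpr ⟨?_, ?_⟩), ?_⟩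
      · intro x hx; rcases Finset.mem_insert.mp hx with rfl | hx
        · exact haI
        · exact (Finset.mem_singleton.mp hx) ▸ hbI
      · exact Finset.card_pair hba.symm
      · intro x hx; simp at hx; simp [hx]
    · have haI : a ∈ Finset.Icc (k+1) n := Finset.mem_Icc.mpr ⟨by omega, ha.2⟩
      have hcardI : 1 < (Finset.Icc (k+1) n).card := by rw [Nat.card_Icc]; omega
      obtain ⟨b, hbI, hba⟩ := Finset.exists_mem_ne hcardI a
      refine ⟨{a, b}, Finset.mem_union_right _ (Finset.mem_powersetCard.mpr ⟨?_, ?_⟩), ?_⟩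
      · intro x hx; rcases Finset.mem_insert.mp hx with rfl | hx
        · exact haI
        · exact (Finset.mem_singleton.mp hx) ▸ hbI
      · exact Finset.card_pair hba.symm
      · intro x hx; simp at hx; simp [hx]
  · -- size
    have h1 : ((Finset.Icc 1 k).powersetCard 2).card = k.choose 2 := by
      rw [Finset.card_powersetCard, Nat.card_Icc]; norm_num
    have h2 : ((Finset.Icc (k+1) n).powersetCard 2).card = (n-k).choose 2 := by
      rw [Finset.card_powersetCard, Nat.card_Icc]; congr 1; omega
    have hle := Finset.card_union_le ((Finset.Icc 1 k).powersetCard 2) ((Finset.Icc (k+1) n).powersetCard 2)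
    rw [h1, h2] at hle
    have e1 := two_mul_choose_two k
    have e2 := two_mul_choose_two (n - k)
    have e3 := two_mul_choose_two n
    have hsplit : n = 2 * k ∨ n = 2 * k + 1 := by omega
    have key2 : 2*(k*(k-1)) + 2*((n-k)*(n-k-1)) ≤ n*(n-1) := by
      have h1 : (1:ℕ) ≤ k := by omega
      have h2 : (1:ℕ) ≤ n - k := by omega
      have h3 : (1:ℕ) ≤ n := by omega
      have h4 : k ≤ n := by omega
      have h1' : (1:ℤ) ≤ (k:ℤ) := by exact_mod_cast h1
      rcases hsplit with h | h
      · have hc : (n:ℤ) = 2*(k:ℤ) := by exact_mod_cast h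
        zify [h1, h2, h3, h4]
        nlinarith [hc, h1']
      · have hc : (n:ℤ) = 2*(k:ℤ)+1 := by exact_mod_cast h
        zify [h1, h2, h3, h4]
        nlinarith [hc, h1']
    omega

/-- Base case `d = n - 2`: complements of the two-clique construction. -/
lemma base_codim_two (n : ℕ) (hn : 4 ≤ n) :
    ∃ P : Finset (Finset ℕ), isFam n (n-2) P ∧ perfectFam n (n-2) P ∧
      2 * P.card ≤ n.choose (n-2) := by
  obtain ⟨Q, hQfam, ⟨hQup, hQlow⟩, hQcard⟩ := base_two n hn
  have hIcard : (Finset.Icc 1 n).card = n := by rw [Nat.card_Icc]; omega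
  refine ⟨Q.image (fun e => Finset.Icc 1 n \ e), ?_, ⟨?_, ?_⟩, ?_⟩
  · intro a ha
    obtain ⟨e, he, rfl⟩ := Finset.mem_image.mp ha
    obtain ⟨hsub, hcard⟩ := hQfam e he
    constructor
    · exact Finset.sdiff_subset
    · rw [Finset.card_sdiff_of_subset hsub, hIcard, hcard]
  · -- upper: u has card (n-2)+1 = n-1
    intro u hu hcard
    have hcard' : u.card = n - 1 := by omega
    set c := Finset.Icc 1 n \ u with hc
    have hccard : c.card = 1 := by
      rw [hc, Finset.card_sdiff_of_subset hu, hIcard, hcard']; omega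
    obtain ⟨e, he, hce⟩ := hQlow c Finset.sdiff_subset (by rw [hccard])
    refine ⟨Finset.Icc 1 n \ e, Finset.mem_image_of_mem _ he, ?_⟩
    intro x hx
    rw [Finset.mem_sdiff] at hx
    by_contra hxu
    exact hx.2 (hce (by rw [hc, Finset.mem_sdiff]; exact ⟨hx.1, hxu⟩))
  · -- lower: v has card (n-2)-1 = n-3
    intro v hv hcard
    have hcard' : v.card = n - 3 := by omega
    set c := Finset.Icc 1 n \ v with hc
    have hccard : c.card = 3 := by
      rw [hc, Finset.card_sdiff_of_subset hv, hIcard, hcard']; omega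
    obtain ⟨e, he, hec⟩ := hQup c Finset.sdiff_subset (by rw [hccard])
    refine ⟨Finset.Icc 1 n \ e, Finset.mem_image_of_mem _ he, ?_⟩
    intro x hx
    rw [Finset.mem_sdiff]
    refine ⟨hv hx, fun hxe => ?_⟩
    have := hec hxe
    rw [hc, Finset.mem_sdiff] at this
    exact this.2 hx
  · have h1 : n.choose (n-2) = n.choose 2 := by
      have : n - (n - 2) = 2 := by omega
      rw [← this, Nat.choose_symm (by omega)]
    have := Finset.card_image_le (s := Q) (f := fun e => Finset.Icc 1 n \ e)
    omega

/-- Key lemma: a perfect family of size at most half. -/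
lemma key_half : ∀ n d : ℕ, 2 ≤ d → d + 2 ≤ n →
    ∃ P : Finset (Finset ℕ), isFam n d P ∧ perfectFam n d P ∧ 2 * P.card ≤ n.choose d := by
  intro n
  induction n using Nat.strong_induction_on with
  | _ n ih =>
    intro d hd hn
    by_cases hd2 : d = 2
    · subst hd2; exact base_two n (by omega)
    by_cases hdn : d = n - 2
    · subst hdn; exact base_codim_two n (by omega)
    -- recursive case: 3 ≤ d ≤ n - 3
    have hd3 : 3 ≤ d := by omega
    have hdn3 : d + 3 ≤ n := by omega
    obtain ⟨F, hFfam, ⟨hFup, hFlow⟩, hFcard⟩ :=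
      ih (n-1) (by omega) (d-1) (by omega) (by omega)
    obtain ⟨U, hUfam, ⟨hUup, hUlow⟩, hUcard⟩ :=
      ih (n-1) (by omega) d (by omega) (by omega)
    have hsubI : Finset.Icc 1 (n-1) ⊆ Finset.Icc 1 n :=
      Finset.Icc_subset_Icc le_rfl (by omega)
    have hnotmem : ∀ B : Finset ℕ, B ⊆ Finset.Icc 1 (n-1) → n ∉ B := by
      intro B hB hnB
      have := hB hnB
      rw [Finset.mem_Icc] at this
      omega
    refine ⟨U ∪ F.image (insert n), ?_, ⟨?_, ?_⟩, ?_⟩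
    · -- isFam
      intro a ha
      rcases Finset.mem_union.mp ha with h | h
      · obtain ⟨hs, hc⟩ := hUfam a h
        exact ⟨hs.trans hsubI, hc⟩
      · obtain ⟨B, hB, rfl⟩ := Finset.mem_image.mp h
        obtain ⟨hs, hc⟩ := hFfam B hB
        constructor
        · intro x hx
          rcases Finset.mem_insert.mp hx with rfl | hx
          · rw [Finset.mem_Icc]; omega
          · exact hsubI (hs hx)
        · rw [Finset.card_insert_of_notMem (hnotmem B hs), hc]; omega
    · -- upper
      intro u hu hcard
      by_cases hnu : n ∈ u
      · have herase : u.erase n ⊆ Finset.Icc 1 (n-1) := by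
          intro x hx
          have hxu := hu (Finset.mem_of_mem_erase hx)
          rw [Finset.mem_Icc] at hxu ⊢
          have := Finset.ne_of_mem_erase hx
          omega
        have hec : (u.erase n).card = (d-1) + 1 := by
          rw [Finset.card_erase_of_mem hnu, hcard]; omega
        obtain ⟨B, hB, hBu⟩ := hFup (u.erase n) herase hec
        refine ⟨insert n B, Finset.mem_union_right _ (Finset.mem_image_of_mem _ hB), ?_⟩
        intro x hx
        rcases Finset.mem_insert.mp hx with rfl | hx
        · exact hnu
        · exact Finset.mem_of_mem_erase (hBu hx)
      · have hu' : u ⊆ Finset.Icc 1 (n-1) := by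
          intro x hx
          have hxu := hu hx
          rw [Finset.mem_Icc] at hxu ⊢
          rcases Nat.lt_or_ge x n with h | h
          · omega
          · exact absurd (by omega : x = n) (fun h' => hnu (h' ▸ hx))
        obtain ⟨a, haU, hau⟩ := hUup u hu' hcard
        exact ⟨a, Finset.mem_union_left _ haU, hau⟩
    · -- lower
      intro v hv hcard
      by_cases hnv : n ∈ v
      · have herase : v.erase n ⊆ Finset.Icc 1 (n-1) := by
          intro x hx
          have hxv := hv (Finset.mem_of_mem_erase hx)
          rw [Finset.mem_Icc] at hxv ⊢
          have := Finset.ne_of_mem_erase hx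
          omega
        have hec : (v.erase n).card = (d-1) - 1 := by
          rw [Finset.card_erase_of_mem hnv, hcard]
        obtain ⟨B, hB, hvB⟩ := hFlow (v.erase n) herase hec
        refine ⟨insert n B, Finset.mem_union_right _ (Finset.mem_image_of_mem _ hB), ?_⟩
        intro x hx
        by_cases hxn : x = n
        · subst hxn; exact Finset.mem_insert_self _ _
        · exact Finset.mem_insert_of_mem (hvB (Finset.mem_erase.mpr ⟨hxn, hx⟩))
      · have hv' : v ⊆ Finset.Icc 1 (n-1) := by
          intro x hx
          have hxv := hv hx
          rw [Finset.mem_Icc] at hxv ⊢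
          rcases Nat.lt_or_ge x n with h | h
          · omega
          · exact absurd (by omega : x = n) (fun h' => hnv (h' ▸ hx))
        obtain ⟨a, haU, hva⟩ := hUlow v hv' hcard
        exact ⟨a, Finset.mem_union_left _ haU, hva⟩
    · -- size
      have hchoose : n.choose d = (n-1).choose (d-1) + (n-1).choose d := by
        obtain ⟨m, rfl⟩ : ∃ m, n = m + 1 := ⟨n-1, by omega⟩
        obtain ⟨e, rfl⟩ : ∃ e, d = e + 1 := ⟨d-1, by omega⟩
        simp [Nat.choose_succ_succ]
      have h1 := Finset.card_union_le U (F.image (insert n))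
      have h2 := Finset.card_image_le (s := F) (f := insert n)
      omega

theorem stmt_6 (n d : ℕ) (hd : 2 ≤ d) (hn : d + 2 ≤ n) (heven : 2 ∣ n.choose d) :
    ∃ M : Finset (Finset ℕ), isFam n d M ∧ perfectFam n d M ∧
      2 * M.card = n.choose d := by
  obtain ⟨P, hPfam, ⟨hPup, hPlow⟩, hPcard⟩ := key_half n d hd hn
  have hPsub : P ⊆ (Finset.Icc 1 n).powersetCard d := by
    intro a ha
    obtain ⟨hs, hc⟩ := hPfam a ha
    exact Finset.mem_powersetCard.mpr ⟨hs, hc⟩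
  have hallcard : ((Finset.Icc 1 n).powersetCard d).card = n.choose d := by
    rw [Finset.card_powersetCard, Nat.card_Icc]
    norm_num
  obtain ⟨M, hPM, hMall, hMcard⟩ :=
    Finset.exists_subsuperset_card_eq hPsub (n := n.choose d / 2) (by omega) (by omega)
  refine ⟨M, ?_, ⟨?_, ?_⟩, ?_⟩
  · intro a ha
    exact Finset.mem_powersetCard.mp (hMall ha)
  · intro u hu hc
    obtain ⟨a, haP, hau⟩ := hPup u hu hc
    exact ⟨a, hPM haP, hau⟩
  · intro v hv hc
    obtain ⟨a, haP, hva⟩ := hPlow v hv hc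
    exact ⟨a, hPM haP, hva⟩
  · rw [hMcard]; omega
end

section
/- Let d ≥ 2 and n = d+2. Then the minimum cardinality of a perfect family of d-element subsets of [n] equals the minimum cardinality of a perfect family of 2-element subsets of [n]; in particular it equals k²-k if n = 2k and k² if n = 2k+1. -/
open Finset


lemma compl_transfer {n c c' : ℕ} (hcc : c + c' = n) (hc : 1 ≤ c) (hc' : 1 ≤ c')
    {M : Finset (Finset ℕ)} (hF : isFam n c M) (hP : perfectFam n c M) :
    ∃ M' : Finset (Finset ℕ), isFam n c' M' ∧ perfectFam n c' M' ∧ M'.card = M.card := by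
  have hn : (Icc 1 n).card = n := by rw [Nat.card_Icc]; omega
  refine ⟨M.image (fun a => Icc 1 n \ a), ?_, ⟨?_, ?_⟩, ?_⟩
  · intro b hb
    simp only [mem_image] at hb
    obtain ⟨a, ha, rfl⟩ := hb
    obtain ⟨hsub, hcard⟩ := hF a ha
    refine ⟨sdiff_subset, ?_⟩
    rw [card_sdiff_of_subset hsub, hn, hcard]; omega
  · -- upperPerfect n c' M'
    intro u hu hcu
    have hv : (Icc 1 n \ u).card = c - 1 := by rw [card_sdiff_of_subset hu, hn]; omega
    obtain ⟨a, ha, hva⟩ := hP.2 (Icc 1 n \ u) sdiff_subset hv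
    refine ⟨Icc 1 n \ a, mem_image_of_mem _ ha, ?_⟩
    intro x hx
    simp only [mem_sdiff] at hx
    by_contra hxu
    exact hx.2 (hva (by simp [mem_sdiff, hx.1, hxu]))
  · -- lowerPerfect n c' M'
    intro u hu hcu
    have hv : (Icc 1 n \ u).card = c + 1 := by rw [card_sdiff_of_subset hu, hn]; omega
    obtain ⟨a, ha, hav⟩ := hP.1 (Icc 1 n \ u) sdiff_subset hv
    refine ⟨Icc 1 n \ a, mem_image_of_mem _ ha, ?_⟩
    intro x hx
    have hxn := hu hx
    simp only [mem_sdiff]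
    refine ⟨hxn, fun hxa => ?_⟩
    have := hav hxa
    simp only [mem_sdiff] at this
    exact this.2 hx
  · apply card_image_of_injOn
    intro a ha b hb hab
    have h1 := (hF a ha).1
    have h2 := (hF b hb).1
    have := congrArg (Icc 1 n \ ·) hab
    simpa [sdiff_sdiff_right_self, inf_eq_inter, inter_eq_right.mpr h1,
      inter_eq_right.mpr h2] using this

lemma mantel : ∀ n : ℕ, ∀ (S : Finset ℕ) (P : Finset (Finset ℕ)), S.card = n →
    (∀ p ∈ P, p ⊆ S ∧ p.card = 2) →
    (∀ a b c : ℕ, {a, b} ∈ P → {b, c} ∈ P → {a, c} ∈ P → False) →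
    P.card ≤ n ^ 2 / 4 := by
  intro n
  induction n using Nat.strong_induction_on with
  | _ n IH =>
    intro S P hS hP htf
    rcases P.eq_empty_or_nonempty with rfl | ⟨p, hp⟩
    · simp
    obtain ⟨u, v, huv, rfl⟩ := card_eq_two.mp (hP _ hp).2
    have huS : u ∈ S := (hP _ hp).1 (by simp)
    have hvS : v ∈ S := (hP _ hp).1 (by simp)
    have hsubS : ({u, v} : Finset ℕ) ⊆ S := by
      intro x hx; simp only [mem_insert, mem_singleton] at hx
      rcases hx with rfl | rfl <;> assumption
    have hn2 : 2 ≤ n := by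
      have := card_le_card hsubS
      rwa [card_pair huv, hS] at this
    set T := S \ {u, v} with hT
    have hTcard : T.card = n - 2 := by
      rw [hT, card_sdiff_of_subset hsubS, hS, card_pair huv]
    set P1 := P.filter (fun p => u ∈ p ∨ v ∈ p) with hP1
    set P2 := P.filter (fun p => ¬(u ∈ p ∨ v ∈ p)) with hP2
    have hsplit : P1.card + P2.card = P.card := by
      rw [hP1, hP2]; exact (card_filter_add_card_filter_not _)
    have hP2le : P2.card ≤ (n - 2) ^ 2 / 4 := by
      apply IH (n - 2) (by omega) T P2 hTcard
      · intro q hq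
        rw [hP2, mem_filter] at hq
        refine ⟨?_, (hP _ hq.1).2⟩
        intro x hx
        have := (hP _ hq.1).1 hx
        rw [hT, mem_sdiff]
        refine ⟨this, ?_⟩
        simp only [mem_insert, mem_singleton]
        rintro (rfl | rfl) <;> exact hq.2 (by simp [hx])
      · intro a b c h1 h2 h3
        rw [hP2, mem_filter] at h1 h2 h3
        exact htf a b c h1.1 h2.1 h3.1
    -- key characterization of members of P1 other than {u,v}
    have key : ∀ q ∈ P1, q ≠ {u, v} →
        ∃ w, w ∈ S ∧ w ≠ u ∧ w ≠ v ∧ (q = {u, w} ∨ q = {v, w}) ∧ q \ {u, v} = {w} := by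
      intro q hq hquv
      rw [hP1, mem_filter] at hq
      obtain ⟨x, y, hxy, hq2⟩ := card_eq_two.mp (hP _ hq.1).2
      have hnotboth : ¬(u ∈ q ∧ v ∈ q) := by
        rintro ⟨h1, h2⟩
        apply hquv
        have hsub : ({u, v} : Finset ℕ) ⊆ q := by
          intro z hz
          rcases mem_insert.mp hz with rfl | hz'
          · exact h1
          · rw [mem_singleton] at hz'; subst hz'; exact h2
        exact (eq_of_subset_of_card_le hsub (by rw [(hP _ hq.1).2, card_pair huv])).symm
      have hmemq : ∀ z ∈ q, z ∈ S := fun z hz => (hP _ hq.1).1 hz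
      subst hq2
      simp only [mem_insert, mem_singleton] at hq hnotboth
      rcases hq.2 with (rfl | rfl) | (rfl | rfl)
      · -- u = x
        refine ⟨y, hmemq y (by simp), fun h => hxy h.symm, fun h => hnotboth ⟨Or.inl rfl, Or.inr h.symm⟩, Or.inl rfl, ?_⟩
        have hyu : y ≠ u := fun h => hxy h.symm
        have hyv : y ≠ v := fun h => hnotboth ⟨Or.inl rfl, Or.inr h.symm⟩
        ext z; simp only [mem_sdiff, mem_insert, mem_singleton]
        constructor
        · rintro ⟨rfl | rfl, h⟩ <;> tauto
        · rintro rfl; exact ⟨Or.inr rfl, by tauto⟩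
      · -- u = y
        refine ⟨x, hmemq x (by simp), fun h => hxy h, fun h => hnotboth ⟨Or.inr rfl, Or.inl h.symm⟩, Or.inl (by rw [pair_comm]), ?_⟩
        have hxu : x ≠ u := hxy
        have hxv : x ≠ v := fun h => hnotboth ⟨Or.inr rfl, Or.inl h.symm⟩
        ext z; simp only [mem_sdiff, mem_insert, mem_singleton]
        constructor
        · rintro ⟨rfl | rfl, h⟩ <;> tauto
        · rintro rfl; exact ⟨Or.inl rfl, by tauto⟩
      · -- v = x
        refine ⟨y, hmemq y (by simp), fun h => hnotboth ⟨Or.inr h.symm, Or.inl rfl⟩, fun h => hxy h.symm, Or.inr rfl, ?_⟩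
        have hyv : y ≠ v := fun h => hxy h.symm
        have hyu : y ≠ u := fun h => hnotboth ⟨Or.inr h.symm, Or.inl rfl⟩
        ext z; simp only [mem_sdiff, mem_insert, mem_singleton]
        constructor
        · rintro ⟨rfl | rfl, h⟩ <;> tauto
        · rintro rfl; exact ⟨Or.inr rfl, by tauto⟩
      · -- v = y
        refine ⟨x, hmemq x (by simp), fun h => hnotboth ⟨Or.inl h.symm, Or.inr rfl⟩, fun h => hxy h, Or.inr (by rw [pair_comm]), ?_⟩
        have hxv : x ≠ v := hxy
        have hxu : x ≠ u := fun h => hnotboth ⟨Or.inl h.symm, Or.inr rfl⟩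
        ext z; simp only [mem_sdiff, mem_insert, mem_singleton]
        constructor
        · rintro ⟨rfl | rfl, h⟩ <;> tauto
        · rintro rfl; exact ⟨Or.inl rfl, by tauto⟩
    have hP1le : P1.card ≤ n - 1 := by
      have hinj : P1.card ≤ (S.erase v).card := by
        apply card_le_card_of_injOn (fun q => if q = {u, v} then u else (q \ {u, v}).sum id)
        · intro q hq
          by_cases hquv : q = {u, v}
          · simp only [if_pos hquv]
            exact mem_erase.mpr ⟨huv, huS⟩
          · obtain ⟨w, hwS, hwu, hwv, _, hqd⟩ := key q hq hquv
            simp only [if_neg hquv, hqd, sum_singleton, id]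
            exact mem_erase.mpr ⟨hwv, hwS⟩
        · intro q1 h1 q2 h2 heq
          by_cases e1 : q1 = {u, v} <;> by_cases e2 : q2 = {u, v}
          · rw [e1, e2]
          · obtain ⟨w, _, hwu, _, _, hqd⟩ := key q2 h2 e2
            simp only [if_pos e1, if_neg e2, hqd, sum_singleton, id] at heq
            exact absurd heq.symm hwu
          · obtain ⟨w, _, hwu, _, _, hqd⟩ := key q1 h1 e1
            simp only [if_neg e1, if_pos e2, hqd, sum_singleton, id] at heq
            exact absurd heq hwu
          · obtain ⟨w1, _, _, _, hc1, hd1⟩ := key q1 h1 e1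
            obtain ⟨w2, _, _, _, hc2, hd2⟩ := key q2 h2 e2
            simp only [if_neg e1, if_neg e2, hd1, hd2, sum_singleton, id] at heq
            subst heq
            have hq1P : q1 ∈ P := (mem_filter.mp (hP1 ▸ h1)).1
            have hq2P : q2 ∈ P := (mem_filter.mp (hP1 ▸ h2)).1
            rcases hc1 with rfl | rfl <;> rcases hc2 with rfl | rfl
            · rfl
            · exact (htf u v w1 hp hq2P hq1P).elim
            · exact (htf u v w1 hp hq1P hq2P).elim
            · rfl
      rw [card_erase_of_mem hvS, hS] at hinj
      exact hinj
    calc P.card = P1.card + P2.card := hsplit.symm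
      _ ≤ (n - 1) + (n - 2)^2/4 := by omega
      _ ≤ n ^ 2 / 4 := by
          rcases Nat.even_or_odd n with ⟨k, hk⟩ | ⟨k, hk⟩ <;> subst hk
          · have hk1 : 1 ≤ k := by omega
            have h1 : (k + k)^2 = 4 * k^2 := by ring
            have h2 : (k + k - 2)^2 = 4 * (k-1)^2 := by
              have h : k + k - 2 = 2 * (k - 1) := by omega
              rw [h]; ring
            have h3 : (k-1)^2 + k = k^2 + 1 - k := by
              zify [hk1, show k ≤ k^2 + 1 by nlinarith]
              ring
            rw [h1, h2]
            generalize k^2 = A at *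
            generalize (k-1)^2 = B at *
            omega
          · have hk1 : 1 ≤ k := by omega
            have h1 : (2*k+1)^2 = 4 * (k^2 + k) + 1 := by ring
            have h2 : (2*k+1-2)^2 = 4*(k*(k-1)) + 1 := by
              have h : 2*k+1-2 = 2*(k-1) + 1 := by omega
              rw [h]; zify [hk1]; ring
            have h3 : k*(k-1) + k = k^2 := by
              zify [hk1]; ring
            rw [h1, h2]
            generalize k^2 = A at *
            generalize k*(k-1) = B at *
            omega

lemma lowerBound {n : ℕ} {M : Finset (Finset ℕ)} (hF : isFam n 2 M)
    (hU : upperPerfect n 2 M) : n.choose 2 ≤ M.card + n ^ 2 / 4 := by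
  have hn : (Icc 1 n).card = n := by rw [Nat.card_Icc]; omega
  set P := (Icc 1 n).powersetCard 2 \ M with hPdef
  have hMsub : M ⊆ (Icc 1 n).powersetCard 2 := by
    intro a ha
    rw [mem_powersetCard]
    exact hF a ha
  have hPcard : P.card = n.choose 2 - M.card := by
    rw [hPdef, card_sdiff_of_subset hMsub, card_powersetCard, hn]
  have hPle : P.card ≤ n ^ 2 / 4 := by
    apply mantel n (Icc 1 n) P hn
    · intro p hp
      rw [hPdef, mem_sdiff, mem_powersetCard] at hp
      exact hp.1
    · intro a b c h1 h2 h3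
      have m1 := mem_sdiff.mp h1
      have m2 := mem_sdiff.mp h2
      have m3 := mem_sdiff.mp h3
      rw [mem_powersetCard] at m1 m2 m3
      have hab : a ≠ b := by
        intro h; subst h
        have := m1.1.2; simp at this
      have hbc : b ≠ c := by
        intro h; subst h
        have := m2.1.2; simp at this
      have hac : a ≠ c := by
        intro h; subst h
        have := m3.1.2; simp at this
      have haI : a ∈ Icc 1 n := m1.1.1 (by simp)
      have hbI : b ∈ Icc 1 n := m1.1.1 (by simp)
      have hcI : c ∈ Icc 1 n := m2.1.1 (by simp)
      have htsub : ({a, b, c} : Finset ℕ) ⊆ Icc 1 n := by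
        intro z hz
        simp only [mem_insert, mem_singleton] at hz
        rcases hz with rfl | rfl | rfl <;> assumption
      have htcard : ({a, b, c} : Finset ℕ).card = 3 := by
        rw [card_insert_of_notMem (by simp [hab, hac]),
          card_insert_of_notMem (by simp [hbc]), card_singleton]
      obtain ⟨m, hmM, hmt⟩ := hU {a, b, c} htsub htcard
      obtain ⟨x, y, hxy, rfl⟩ := card_eq_two.mp (hF _ hmM).2
      have hx : x ∈ ({a, b, c} : Finset ℕ) := hmt (by simp)
      have hy : y ∈ ({a, b, c} : Finset ℕ) := hmt (by simp)
      simp only [mem_insert, mem_singleton] at hx hy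
      have : ({x, y} : Finset ℕ) = {a, b} ∨ ({x, y} : Finset ℕ) = {b, c} ∨
          ({x, y} : Finset ℕ) = {a, c} := by
        rcases hx with rfl | rfl | rfl <;> rcases hy with rfl | rfl | rfl
        · exact absurd rfl hxy
        · exact Or.inl rfl
        · exact Or.inr (Or.inr rfl)
        · exact Or.inl (pair_comm _ _)
        · exact absurd rfl hxy
        · exact Or.inr (Or.inl rfl)
        · exact Or.inr (Or.inr (pair_comm _ _))
        · exact Or.inr (Or.inl (pair_comm _ _))
        · exact absurd rfl hxy
      rcases this with h | h | h
      · exact m1.2 (h ▸ hmM)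
      · exact m2.2 (h ▸ hmM)
      · exact m3.2 (h ▸ hmM)
  omega

lemma construction (n : ℕ) (hn : 4 ≤ n) :
    ∃ M : Finset (Finset ℕ), isFam n 2 M ∧ perfectFam n 2 M ∧
      M.card = (n / 2).choose 2 + (n - n / 2).choose 2 := by
  set A := Icc 1 (n / 2) with hA
  set B := Icc (n / 2 + 1) n with hB
  have hAcard : A.card = n / 2 := by rw [hA, Nat.card_Icc]; omega
  have hBcard : B.card = n - n / 2 := by rw [hB, Nat.card_Icc]; omega
  have hAsub : A ⊆ Icc 1 n := Icc_subset_Icc le_rfl (by omega)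
  have hBsub : B ⊆ Icc 1 n := Icc_subset_Icc (by omega) le_rfl
  refine ⟨A.powersetCard 2 ∪ B.powersetCard 2, ?_, ⟨?_, ?_⟩, ?_⟩
  · intro a ha
    rcases mem_union.mp ha with h | h <;> rw [mem_powersetCard] at h
    · exact ⟨h.1.trans hAsub, h.2⟩
    · exact ⟨h.1.trans hBsub, h.2⟩
  · -- upperPerfect
    intro u hu hcu
    set u1 := u.filter (fun x => x ≤ n / 2) with hu1
    set u2 := u.filter (fun x => ¬ x ≤ n / 2) with hu2
    have hsum : u1.card + u2.card = 3 := by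
      rw [hu1, hu2, card_filter_add_card_filter_not, hcu]
    have hu1A : u1 ⊆ A := by
      intro x hx
      rw [hu1, mem_filter] at hx
      have := mem_Icc.mp (hu hx.1)
      rw [hA, mem_Icc]; exact ⟨this.1, hx.2⟩
    have hu2B : u2 ⊆ B := by
      intro x hx
      rw [hu2, mem_filter] at hx
      have := mem_Icc.mp (hu hx.1)
      rw [hB, mem_Icc]; exact ⟨by omega, this.2⟩
    rcases le_or_gt 2 u1.card with h | h
    · obtain ⟨t, hts, htc⟩ := exists_subset_card_eq h
      refine ⟨t, mem_union_left _ (mem_powersetCard.mpr ⟨hts.trans hu1A, htc⟩),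
        hts.trans (filter_subset _ _)⟩
    · have h2 : 2 ≤ u2.card := by omega
      obtain ⟨t, hts, htc⟩ := exists_subset_card_eq h2
      refine ⟨t, mem_union_right _ (mem_powersetCard.mpr ⟨hts.trans hu2B, htc⟩),
        hts.trans (filter_subset _ _)⟩
  · -- lowerPerfect
    intro u hu hcu
    have hcu1 : u.card = 1 := by omega
    obtain ⟨x, rfl⟩ := card_eq_one.mp hcu1
    have hx := mem_Icc.mp (hu (mem_singleton_self x))
    by_cases hc : x ≤ n / 2
    · have hxA : x ∈ A := by rw [hA, mem_Icc]; exact ⟨hx.1, hc⟩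
      have : 0 < (A.erase x).card := by
        rw [card_erase_of_mem hxA, hAcard]; omega
      obtain ⟨y, hy⟩ := card_pos.mp this
      have hyx : y ≠ x := (mem_erase.mp hy).1
      have hyA : y ∈ A := (mem_erase.mp hy).2
      refine ⟨{x, y}, mem_union_left _ (mem_powersetCard.mpr ⟨?_, card_pair (Ne.symm hyx)⟩), ?_⟩
      · intro z hz
        simp only [mem_insert, mem_singleton] at hz
        rcases hz with rfl | rfl <;> assumption
      · simp
    · have hxB : x ∈ B := by rw [hB, mem_Icc]; omega
      have : 0 < (B.erase x).card := by
        rw [card_erase_of_mem hxB, hBcard]; omega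
      obtain ⟨y, hy⟩ := card_pos.mp this
      have hyx : y ≠ x := (mem_erase.mp hy).1
      have hyB : y ∈ B := (mem_erase.mp hy).2
      refine ⟨{x, y}, mem_union_right _ (mem_powersetCard.mpr ⟨?_, card_pair (Ne.symm hyx)⟩), ?_⟩
      · intro z hz
        simp only [mem_insert, mem_singleton] at hz
        rcases hz with rfl | rfl <;> assumption
      · simp
  · rw [card_union_of_disjoint, card_powersetCard, card_powersetCard, hAcard, hBcard]
    rw [disjoint_left]
    intro p hp hp'
    rw [mem_powersetCard] at hp hp'
    have : 0 < p.card := by rw [hp.2]; omega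
    obtain ⟨z, hz⟩ := card_pos.mp this
    have h1 := mem_Icc.mp (hp.1 hz)
    have h2 := mem_Icc.mp (hp'.1 hz)
    omega

lemma choose_two (k : ℕ) : 2 * k.choose 2 = k * (k - 1) := by
  induction k with
  | zero => simp
  | succ m ih =>
    rw [Nat.choose_succ_succ, Nat.choose_one_right, Nat.mul_add, ih]
    cases m with
    | zero => simp
    | succ p => simp only [Nat.succ_sub_one]; ring

lemma mul_pred_eq (k : ℕ) : k * (k - 1) = k ^ 2 - k := by
  cases k with
  | zero => simp
  | succ p =>
    simp only [Nat.succ_sub_one]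
    zify [show p + 1 ≤ (p + 1) ^ 2 by nlinarith]
    ring

theorem stmt_10 (d : ℕ) (hd : 2 ≤ d) :
    ∃ N : ℕ,
      IsLeast {m : ℕ | ∃ M : Finset (Finset ℕ),
          isFam (d + 2) d M ∧ perfectFam (d + 2) d M ∧ M.card = m} N ∧
      IsLeast {m : ℕ | ∃ M : Finset (Finset ℕ),
          isFam (d + 2) 2 M ∧ perfectFam (d + 2) 2 M ∧ M.card = m} N ∧
      (∀ k : ℕ, d + 2 = 2 * k → N = k ^ 2 - k) ∧
      (∀ k : ℕ, d + 2 = 2 * k + 1 → N = k ^ 2) := by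
  have hn4 : 4 ≤ d + 2 := by omega
  have hset : {m : ℕ | ∃ M : Finset (Finset ℕ),
          isFam (d + 2) d M ∧ perfectFam (d + 2) d M ∧ M.card = m}
      = {m : ℕ | ∃ M : Finset (Finset ℕ),
          isFam (d + 2) 2 M ∧ perfectFam (d + 2) 2 M ∧ M.card = m} := by
    ext m
    simp only [Set.mem_setOf_eq]
    constructor
    · rintro ⟨M, h1, h2, rfl⟩
      obtain ⟨M', a, b, c⟩ := compl_transfer (rfl : d + 2 = d + 2) (by omega) (by omega) h1 h2
      exact ⟨M', a, b, c⟩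
    · rintro ⟨M, h1, h2, rfl⟩
      obtain ⟨M', a, b, c⟩ := compl_transfer (show 2 + d = d + 2 by omega) (by omega) (by omega) h1 h2
      exact ⟨M', a, b, c⟩
  obtain ⟨M₀, hF₀, hP₀, hC₀⟩ := construction (d + 2) hn4
  have hkle : ∀ k : ℕ, k ≤ k ^ 2 := fun k => by nlinarith
  rcases Nat.even_or_odd (d + 2) with ⟨k, hk⟩ | ⟨k, hk⟩
  · -- n = k + k
    have hk2 : 2 ≤ k := by omega
    have hdiv : (d + 2) / 2 = k := by omega
    have hdiv2 : (d + 2) - (d + 2) / 2 = k := by omega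
    have hC : M₀.card = k ^ 2 - k := by
      rw [hC₀, hdiv2, hdiv]
      have h2c := choose_two k
      have hkk := mul_pred_eq k
      have hkA := hkle k
      omega
    have hleast2 : IsLeast {m : ℕ | ∃ M : Finset (Finset ℕ),
          isFam (d + 2) 2 M ∧ perfectFam (d + 2) 2 M ∧ M.card = m} (k ^ 2 - k) := by
      constructor
      · exact ⟨M₀, hF₀, hP₀, hC⟩
      · rintro m ⟨M, h1, h2, rfl⟩
        have hlb := lowerBound h1 h2.1
        rw [hk] at hlb
        have h2c := choose_two (k + k)
        have e1 : (k + k) ^ 2 / 4 = k ^ 2 := by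
          rw [show (k + k) ^ 2 = 4 * k ^ 2 by ring]
          exact Nat.mul_div_cancel_left _ (by norm_num)
        have e2 : (k + k) * (k + k - 1) = 4 * k ^ 2 - 2 * k := by
          zify [show 1 ≤ k + k by omega, show 2 * k ≤ 4 * k ^ 2 by nlinarith]
          ring
        have hkA := hkle k
        rw [e1] at hlb
        rw [e2] at h2c
        omega
    refine ⟨k ^ 2 - k, hset ▸ hleast2, hleast2, ?_, ?_⟩
    · intro k' hk'
      obtain rfl : k' = k := by omega
      rfl
    · intro k' hk'
      exfalso; omega
  · -- n = 2k + 1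
    have hk2 : 2 ≤ k := by omega
    have hdiv : (d + 2) / 2 = k := by omega
    have hdiv2 : (d + 2) - (d + 2) / 2 = k + 1 := by omega
    have hC : M₀.card = k ^ 2 := by
      rw [hC₀, hdiv2, hdiv]
      have h2c := choose_two k
      have h2c' := choose_two (k + 1)
      simp only [Nat.add_sub_cancel] at h2c'
      have e : k * (k - 1) + (k + 1) * k = 2 * k ^ 2 := by
        zify [show 1 ≤ k by omega]
        ring
      omega
    have hleast2 : IsLeast {m : ℕ | ∃ M : Finset (Finset ℕ),
          isFam (d + 2) 2 M ∧ perfectFam (d + 2) 2 M ∧ M.card = m} (k ^ 2) := by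
      constructor
      · exact ⟨M₀, hF₀, hP₀, hC⟩
      · rintro m ⟨M, h1, h2, rfl⟩
        have hlb := lowerBound h1 h2.1
        rw [hk] at hlb
        have h2c := choose_two (2 * k + 1)
        simp only [Nat.add_sub_cancel] at h2c
        have e1 : (2 * k + 1) ^ 2 / 4 = k ^ 2 + k := by
          rw [show (2 * k + 1) ^ 2 = 4 * (k ^ 2 + k) + 1 by ring]
          omega
        have e2 : (2 * k + 1) * (2 * k) = 4 * k ^ 2 + 2 * k := by ring
        rw [e1] at hlb
        rw [e2] at h2c
        omega
    refine ⟨k ^ 2, hset ▸ hleast2, hleast2, ?_, ?_⟩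
    · intro k' hk'
      exfalso; omega
    · intro k' hk'
      obtain rfl : k' = k := by omega
      rfl
end
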